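/- arXiv:1809.10750 — 5 statements merged into one kernel-verified Lean document; each statement's English description precedes it below -/
import Mathlib

section
/- Let G be an abelian topological group and A, K ⊂ G arbitrary subsets. Then int(A) \ ∂^K A ⊂ {x ∈ int(A) : (−K) + x ⊂ int(A)}, where ∂^K A = ((K + cl(A)) ∩ cl(Aᶜ)) ∪ ((K + cl(Aᶜ)) ∩ cl(A)). -/
open Set Pointwise

/-- int(A) \ ∂^K A ⊆ {x ∈ int(A) : −K + x ⊆ int(A)}. -/
theorem stmt8 {G : Type*} [AddCommGroup G] [TopologicalSpace G] [IsTopologicalAddGroup G]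
    (A K : Set G) :
    interior A \ (((K + closure A) ∩ closure Aᶜ) ∪ ((K + closure Aᶜ) ∩ closure A))
      ⊆ {x : G | x ∈ interior A ∧ ∀ k ∈ K, -k + x ∈ interior A} := by
  rintro x ⟨hx, hnb⟩
  refine ⟨hx, fun k hk => ?_⟩
  by_contra h
  apply hnb
  right
  refine ⟨⟨k, hk, -k + x, ?_, by simp⟩, subset_closure (interior_subset hx)⟩
  rw [closure_compl]
  exact h
end

section
/- Let G be an abelian topological group and A, K, L ⊂ G arbitrary subsets. Then L + ∂^K A ⊂ ∂^{L+K} A ∪ ∂^L A, where ∂^M A = ((M + cl(A)) ∩ cl(Aᶜ)) ∪ ((M + cl(Aᶜ)) ∩ cl(A)). -/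
open Set Pointwise

/-- L + ∂^K A ⊆ ∂^{L+K} A ∪ ∂^L A. -/
theorem stmt10 {G : Type*} [AddCommGroup G] [TopologicalSpace G] [IsTopologicalAddGroup G]
    (A K L : Set G) :
    L + (((K + closure A) ∩ closure Aᶜ) ∪ ((K + closure Aᶜ) ∩ closure A))
      ⊆ ((((L + K) + closure A) ∩ closure Aᶜ) ∪ (((L + K) + closure Aᶜ) ∩ closure A)) ∪
        (((L + closure A) ∩ closure Aᶜ) ∪ ((L + closure Aᶜ) ∩ closure A)) := by
  have hAc : (closure Aᶜ)ᶜ ⊆ closure A := by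
    rw [← interior_compl, compl_compl] at *
    exact interior_subset.trans subset_closure
  have hA : (closure A)ᶜ ⊆ closure Aᶜ := fun x hx =>
    subset_closure (fun h => hx (subset_closure h))
  rintro x ⟨l, hl, y, hy, rfl⟩
  rcases hy with ⟨⟨k, hk, a, ha, rfl⟩, hyc⟩ | ⟨⟨k, hk, a, ha, rfl⟩, hyc⟩
  · by_cases h : l + (k + a) ∈ closure Aᶜ
    · exact Or.inl (Or.inl ⟨⟨l + k, ⟨l, hl, k, hk, rfl⟩, a, ha, add_assoc ..⟩, h⟩)
    · exact Or.inr (Or.inr ⟨⟨l, hl, k + a, hyc, rfl⟩, hAc h⟩)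
  · by_cases h : l + (k + a) ∈ closure A
    · exact Or.inl (Or.inr ⟨⟨l + k, ⟨l, hl, k, hk, rfl⟩, a, ha, add_assoc ..⟩, h⟩)
    · exact Or.inr (Or.inl ⟨⟨l, hl, k + a, hyc, rfl⟩, hA h⟩)
end

section
/- Let G be a σ-compact locally compact abelian group with Haar measure θ_G, let (A_n) be a van Hove sequence in G, and let Λ ⊂ G be uniformly discrete with counting measure δ_Λ. Suppose α ≥ 0 and δ_Λ ⪯ α θ_G in the sense that for every ε > 0 there is a compact K ⊂ G with (1−ε) δ_Λ(A) ≤ α θ_G(K + A) for all compact A ⊂ G. Then the upper Banach density satisfies D⁺_𝒜(Λ) = limsup_n sup_{t∈G} card(Λ ∩ (A_n + t))/θ_G(A_n) ≤ α. -/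
open MeasureTheory Set Filter Pointwise
open Topology

/-- If δ_Λ ⪯ α θ_G, then the upper Banach density of Λ along any van Hove sequence is ≤ α. -/
theorem stmt16 {G : Type*} [AddCommGroup G] [TopologicalSpace G] [IsTopologicalAddGroup G]
    [LocallyCompactSpace G] [SigmaCompactSpace G] [MeasurableSpace G] [BorelSpace G]
    (μ : Measure G) [μ.IsAddHaarMeasure]
    (A : ℕ → Set G) (hAc : ∀ n, IsCompact (A n)) (hApos : ∀ n, 0 < μ (A n))
    -- van Hove property
    (hvH : ∀ K : Set G, IsCompact K →
      Tendsto (fun n =>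
        μ (((K + closure (A n)) ∩ closure (A n)ᶜ) ∪ ((K + closure (A n)ᶜ) ∩ closure (A n)))
          / μ (A n)) atTop (nhds 0))
    (Λ : Set G)
    (hΛ : ∃ B : Set G, IsCompact B ∧ B ∈ nhds (0 : G) ∧
      ∀ x : G, (Λ ∩ ((x + ·) '' B)).Subsingleton)
    (α : ENNReal)
    -- δ_Λ ⪯ α θ_G
    (hle : ∀ ε : ENNReal, 0 < ε → ε < 1 → ∃ K : Set G, IsCompact K ∧
      ∀ C : Set G, IsCompact C → (1 - ε) * ((Λ ∩ C).ncard : ENNReal) ≤ α * μ (K + C)) :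
    Filter.limsup
      (fun n => ⨆ t : G, ((Λ ∩ ((· + t) '' A n)).ncard : ENNReal) / μ (A n)) atTop ≤ α := by
  have key : ∀ ε : ENNReal, 0 < ε → ε < 1 →
      Filter.limsup
        (fun n => ⨆ t : G, ((Λ ∩ ((· + t) '' A n)).ncard : ENNReal) / μ (A n)) atTop
        ≤ α / (1 - ε) := by
    intro ε hε hε1
    obtain ⟨K, hKc, hK⟩ := hle ε hε hε1
    set K' : Set G := K ∪ {0} with hK'def
    have hK'c : IsCompact K' := hKc.union isCompact_singleton
    set c : ENNReal := α / (1 - ε) with hc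
    set bnd : ℕ → Set G := fun n =>
      ((K' + closure (A n)) ∩ closure (A n)ᶜ) ∪ ((K' + closure (A n)ᶜ) ∩ closure (A n))
      with hbnd
    have hμfin : ∀ n, μ (A n) ≠ ⊤ := fun n => ((hAc n).measure_lt_top).ne
    have hμ0 : ∀ n, μ (A n) ≠ 0 := fun n => (hApos n).ne'
    have h1ε0 : (1 : ENNReal) - ε ≠ 0 := by
      simp [tsub_eq_zero_iff_le, not_le, hε1]
    have h1εt : (1 : ENNReal) - ε ≠ ⊤ := by
      exact ((tsub_le_self).trans_lt (by norm_num : (1:ENNReal) < ⊤)).ne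
    have bound : ∀ n, (⨆ t : G, ((Λ ∩ ((· + t) '' A n)).ncard : ENNReal) / μ (A n))
        ≤ c * (1 + μ (bnd n) / μ (A n)) := by
      intro n
      have hsub : K' + A n ⊆ A n ∪ bnd n := by
        rintro x ⟨k, hk, a, ha, rfl⟩
        by_cases hx : k + a ∈ A n
        · exact Or.inl hx
        · refine Or.inr (Or.inl ⟨⟨k, hk, a, subset_closure ha, rfl⟩, ?_⟩)
          exact subset_closure hx
      have hKA : μ (K' + A n) ≤ μ (A n) + μ (bnd n) :=
        (measure_mono hsub).trans (measure_union_le _ _)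
      have hratio : μ (K' + A n) / μ (A n) ≤ 1 + μ (bnd n) / μ (A n) := by
        calc μ (K' + A n) / μ (A n) ≤ (μ (A n) + μ (bnd n)) / μ (A n) :=
              ENNReal.div_le_div_right hKA _
          _ = 1 + μ (bnd n) / μ (A n) := by
              rw [ENNReal.add_div, ENNReal.div_self (hμ0 n) (hμfin n)]
      refine iSup_le fun t => ?_
      have hC : IsCompact ((· + t) '' A n) := (hAc n).image (continuous_add_right t)
      have step := hK _ hC
      have hset : K + (· + t) '' A n ⊆ (· + t) '' (K' + A n) := by
        rintro x ⟨k, hk, y, ⟨a, ha, rfl⟩, rfl⟩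
        exact ⟨k + a, ⟨k, Or.inl hk, a, ha, rfl⟩, by abel⟩
      have hmeas : μ ((· + t) '' (K' + A n)) = μ (K' + A n) := by
        have himg : (· + t) '' (K' + A n) = t +ᵥ (K' + A n) := by
          ext x
          simp only [Set.mem_image, Set.mem_vadd_set, vadd_eq_add]
          constructor
          · rintro ⟨y, hy, rfl⟩; exact ⟨y, hy, add_comm t y⟩
          · rintro ⟨y, hy, rfl⟩; exact ⟨y, hy, add_comm y t⟩
        rw [himg, measure_vadd]
      have step2 : (1 - ε) * ((Λ ∩ ((· + t) '' A n)).ncard : ENNReal) ≤ α * μ (K' + A n) :=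
        step.trans (by
          exact mul_le_mul_right (le_of_le_of_eq (measure_mono hset) hmeas) α)
      have step3 : ((Λ ∩ ((· + t) '' A n)).ncard : ENNReal) ≤ (α * μ (K' + A n)) / (1 - ε) := by
        rw [ENNReal.le_div_iff_mul_le (Or.inl h1ε0) (Or.inl h1εt), mul_comm]
        exact step2
      calc ((Λ ∩ ((· + t) '' A n)).ncard : ENNReal) / μ (A n)
          ≤ ((α * μ (K' + A n)) / (1 - ε)) / μ (A n) := ENNReal.div_le_div_right step3 _
        _ = c * (μ (K' + A n) / μ (A n)) := by
            rw [hc]; simp only [div_eq_mul_inv]; ring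
        _ ≤ c * (1 + μ (bnd n) / μ (A n)) := mul_le_mul_right hratio c
    have htend : Tendsto (fun n => c * (1 + μ (bnd n) / μ (A n))) atTop (𝓝 (c * 1)) := by
      have h0 := hvH K' hK'c
      have h1 : Tendsto (fun n => 1 + μ (bnd n) / μ (A n)) atTop (𝓝 (1 + 0)) :=
        tendsto_const_nhds.add h0
      simpa using ENNReal.Tendsto.const_mul (by simpa using h1) (Or.inl one_ne_zero)
    refine le_trans (limsup_le_limsup (Eventually.of_forall bound)) ?_
    rw [htend.limsup_eq, mul_one]
  -- now let ε → 0 along 1/(k+2)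
  have hinv0 : Tendsto (fun k : ℕ => ((k : ENNReal) + 2)⁻¹) atTop (𝓝 0) := by
    refine tendsto_of_tendsto_of_tendsto_of_le_of_le tendsto_const_nhds
      ENNReal.tendsto_inv_nat_nhds_zero (fun k => zero_le) (fun k => ?_)
    exact ENNReal.inv_le_inv.mpr (le_add_of_nonneg_right (by norm_num))
  have h2 : Tendsto (fun k : ℕ => (1 : ENNReal) - ((k : ENNReal) + 2)⁻¹) atTop (𝓝 1) := by
    simpa using ENNReal.Tendsto.sub tendsto_const_nhds hinv0 (Or.inl ENNReal.one_ne_top)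
  have h3 : Tendsto (fun k : ℕ => α / ((1 : ENNReal) - ((k : ENNReal) + 2)⁻¹)) atTop (𝓝 α) := by
    simpa using ENNReal.Tendsto.const_div h2 (Or.inl ENNReal.one_ne_top)
  refine ge_of_tendsto h3 (Eventually.of_forall fun k => key _ ?_ ?_)
  · exact ENNReal.inv_pos.mpr (by simp)
  · rw [ENNReal.inv_lt_one]
    exact lt_of_lt_of_le (by norm_num : (1:ENNReal) < 2) le_add_self
end

section
/- Let G be a σ-compact locally compact abelian group with Haar measure θ_G. For any relatively compact A ⊂ G there exists a van Hove sequence (A_n) of compact sets such that A_n = cl(int(A_n)), θ_G(∂A_n) = 0, A_n ⊂ int(A_{n+1}), and A ⊂ A_n for all n. -/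
open MeasureTheory Set Filter Pointwise
open scoped ENNReal NNReal

section VanHoveAux

variable {G : Type*} [AddCommGroup G]

/-- `n`-fold pointwise sumset of `V` (with `vpowVH V 0 = {0}`). -/
private def vpowVH (V : Set G) : ℕ → Set G
  | 0 => {0}
  | n+1 => V + vpowVH V n

private lemma vpowVH_one (V : Set G) : vpowVH V 1 = V := by
  simp [vpowVH, Set.add_singleton]

private lemma zero_mem_vpowVH {V : Set G} (h : (0:G) ∈ V) : ∀ n, (0:G) ∈ vpowVH V n
  | 0 => rfl
  | n+1 => ⟨0, h, 0, zero_mem_vpowVH h n, by simp⟩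

private lemma vpowVH_subset_vpowVH {V W : Set G} (h : V ⊆ W) : ∀ n, vpowVH V n ⊆ vpowVH W n
  | 0 => subset_rfl
  | n+1 => Set.add_subset_add h (vpowVH_subset_vpowVH h n)

private lemma vpowVH_add (V : Set G) : ∀ m n, vpowVH V (m + n) = vpowVH V m + vpowVH V n
  | 0, n => by simp [vpowVH, Set.singleton_zero, Nat.zero_add]
  | m+1, n => by
      rw [Nat.succ_add, show vpowVH V (m+n+1) = V + vpowVH V (m+n) from rfl,
        show vpowVH V (m+1) = V + vpowVH V m from rfl, vpowVH_add V m n, add_assoc]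

private lemma vpowVH_mono {V : Set G} (h0 : (0:G) ∈ V) {m n : ℕ} (h : m ≤ n) :
    vpowVH V m ⊆ vpowVH V n := by
  obtain ⟨k, rfl⟩ := Nat.exists_eq_add_of_le h
  rw [vpowVH_add]
  intro x hx
  exact ⟨x, hx, 0, zero_mem_vpowVH h0 k, by simp⟩

private lemma vpowVH_add_set (A B : Set G) : ∀ n, vpowVH (A + B) n = vpowVH A n + vpowVH B n
  | 0 => by simp [vpowVH, Set.singleton_zero]
  | n+1 => by
      rw [show vpowVH (A+B) (n+1) = (A+B) + vpowVH (A+B) n from rfl,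
        show vpowVH A (n+1) = A + vpowVH A n from rfl,
        show vpowVH B (n+1) = B + vpowVH B n from rfl,
        vpowVH_add_set A B n, add_add_add_comm]

private lemma vpowVH_double {U V : Set G} (h : U + U ⊆ V) : ∀ n, vpowVH U (2*n) ⊆ vpowVH V n
  | 0 => subset_rfl
  | n+1 => by
      have e : 2*(n+1) = 2 + 2*n := by ring
      rw [e, vpowVH_add, show n + 1 = 1 + n by omega, vpowVH_add, vpowVH_one]
      exact Set.add_subset_add
        (by rw [show (2:ℕ) = 1+1 from rfl, vpowVH_add, vpowVH_one]; exact h)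
        (vpowVH_double h n)

private lemma vpowVH_half {U V : Set G} (h0 : (0:G) ∈ U) (h : U + U ⊆ V) (n : ℕ) :
    vpowVH U n ⊆ vpowVH V ((n+1)/2) := by
  have h1 : n ≤ 2 * ((n+1)/2) := by omega
  exact (vpowVH_mono h0 h1).trans (vpowVH_double h _)

/-- every element of the `n`-fold sumset of a finite set is a bounded combination -/
private lemma vpowVH_finset_rep (F : Finset G) :
    ∀ n, ∀ x ∈ vpowVH (↑F : Set G) n,
      ∃ c : G → ℕ, (∀ g, c g ≤ n) ∧ x = ∑ g ∈ F, c g • g := by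
  intro n
  induction n with
  | zero =>
      intro x hx
      rcases hx with rfl
      exact ⟨fun _ => 0, fun g => le_rfl, by simp⟩
  | succ n ih =>
      rintro x ⟨y, hy, s, hs, rfl⟩
      obtain ⟨c, hc, rfl⟩ := ih s hs
      classical
      refine ⟨fun g => c g + if g = y then 1 else 0, fun g => ?_, ?_⟩
      · simp only []; have := hc g; split <;> omega
      · have hyF : y ∈ F := hy
        rw [Finset.sum_congr rfl (fun g _ => add_smul (c g) _ g)]
        rw [Finset.sum_add_distrib]
        have e : ∑ g ∈ F, (if g = y then 1 else 0 : ℕ) • g = y := by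
          have e2 : ∀ g ∈ F, (if g = y then 1 else 0 : ℕ) • g = (if g = y then g else 0) := by
            intro g _; split <;> simp
          rw [Finset.sum_congr rfl e2, Finset.sum_ite_eq' F y (fun g => g)]
          simp [hyF]
        rw [e]; abel

private lemma vpowVH_finset_card (F : Finset G) (n : ℕ) :
    ∃ H : Finset G, vpowVH (↑F : Set G) n ⊆ ↑H ∧ H.card ≤ (n+1)^F.card := by
  classical
  refine ⟨Finset.image (fun c : ↑F → Fin (n+1) => ∑ g ∈ F.attach, (c g : ℕ) • (g:G))
      Finset.univ, ?_, ?_⟩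
  · intro x hx
    obtain ⟨c, hc, rfl⟩ := vpowVH_finset_rep F n x hx
    refine Finset.mem_coe.2 (Finset.mem_image.2 ⟨fun g => ⟨c g, by have := hc g; omega⟩,
      Finset.mem_univ _, ?_⟩)
    rw [← Finset.sum_attach F (fun g => c g • g)]
  · exact (Finset.card_image_le).trans (by
      rw [Finset.card_univ, Fintype.card_fun]
      simp [Fintype.card_coe])

variable [TopologicalSpace G] [IsTopologicalAddGroup G]

private lemma closure_subset_add_nhdsVH {X W : Set G} (hW : W ∈ nhds (0:G)) :
    closure X ⊆ X + W := by
  intro x hx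
  have h0 : (0:G) ∈ interior W := mem_interior_iff_mem_nhds.2 hW
  have hop : IsOpen ({x} + -interior W : Set G) := (isOpen_interior.neg).add_left
  have hmem : x ∈ ({x} + -interior W : Set G) :=
    ⟨x, rfl, 0, by simpa using h0, by simp⟩
  obtain ⟨a, hao, haX⟩ := (mem_closure_iff.1 hx) _ hop hmem
  obtain ⟨u, hu, nw, hnw, hev⟩ := hao
  rcases hu with rfl
  refine ⟨a, haX, -nw, interior_subset (Set.mem_neg.1 hnw), ?_⟩
  have e : a = u + nw := hev.symm
  show a + -nw = u
  rw [e]; abel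

private lemma vpowVH_compact {V : Set G} (hV : IsCompact V) : ∀ n, IsCompact (vpowVH V n)
  | 0 => isCompact_singleton
  | n+1 => hV.add (vpowVH_compact hV n)

variable [MeasurableSpace G] [BorelSpace G]
variable (μ : Measure G) [μ.IsAddHaarMeasure]

private lemma measure_finset_add_leVH (H : Finset G) (X : Set G) :
    μ (↑H + X) ≤ H.card * μ X := by
  have hsub : (↑H : Set G) + X ⊆ ⋃ h ∈ H, (fun y => -h + y) ⁻¹' X := by
    rintro x ⟨h, hh, y, hy, rfl⟩
    exact Set.mem_biUnion hh (by simpa using hy)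
  calc μ (↑H + X) ≤ μ (⋃ h ∈ H, (fun y => -h + y) ⁻¹' X) := measure_mono hsub
    _ ≤ ∑ h ∈ H, μ ((fun y => -h + y) ⁻¹' X) := measure_biUnion_finset_le H _
    _ = ∑ _h ∈ H, μ X := by
        refine Finset.sum_congr rfl fun h _ => ?_
        exact measure_preimage_add μ (-h) X
    _ = H.card * μ X := by simp [Finset.sum_const, nsmul_eq_mul]

private lemma vpowVH_measure_recursion {V : Set G} (hV : IsCompact V) (hV0 : V ∈ nhds (0:G)) :
    ∃ N : ℕ, ∀ n, μ (vpowVH V n) ≤ ((n+1 : ℕ) : ℝ≥0∞)^N * μ (vpowVH V (n/2+1)) := by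
  classical
  obtain ⟨U, hUo, hU0, hUadd⟩ := exists_open_nhds_zero_half hV0
  have hUU : U + U ⊆ V := by rintro x ⟨u, hu, w, hw, rfl⟩; exact hUadd u hu w hw
  have hcov : V ⊆ ⋃ x : G, ({x} + U) := by
    intro v _
    exact Set.mem_iUnion.2 ⟨v, v, rfl, 0, hU0, by simp⟩
  obtain ⟨t, ht⟩ := hV.elim_finite_subcover (fun x : G => ({x} + U : Set G))
    (fun x => hUo.add_left) hcov
  have htU : V ⊆ (↑t : Set G) + U := by
    intro v hv
    obtain ⟨x, hx, hvx⟩ := Set.mem_iUnion₂.1 (ht hv)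
    obtain ⟨b, hb, u, hu, rfl⟩ := hvx
    rcases hb with rfl
    exact ⟨b, hx, u, hu, rfl⟩
  refine ⟨t.card, fun n => ?_⟩
  obtain ⟨H, hH, hHcard⟩ := vpowVH_finset_card t n
  have h1 : vpowVH V n ⊆ ↑H + closure (vpowVH U n) := by
    refine (vpowVH_subset_vpowVH htU n).trans ?_
    rw [vpowVH_add_set]
    exact Set.add_subset_add hH subset_closure
  have h2 : closure (vpowVH U n) ⊆ vpowVH V (n/2+1) := by
    refine (closure_subset_add_nhdsVH (X := vpowVH U n) (W := U) (hUo.mem_nhds hU0)).trans ?_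
    have h3 : vpowVH U n + U ⊆ vpowVH U (n+1) := by
      rw [show vpowVH U (n+1) = U + vpowVH U n from rfl, add_comm]
    refine h3.trans ?_
    have h4 := vpowVH_half hU0 hUU (n+1)
    simpa [show (n+1+1)/2 = n/2+1 by omega] using h4
  calc μ (vpowVH V n) ≤ μ (↑H + closure (vpowVH U n)) := measure_mono h1
    _ ≤ H.card * μ (closure (vpowVH U n)) := measure_finset_add_leVH μ H _
    _ ≤ ((n+1)^t.card : ℕ) * μ (vpowVH V (n/2+1)) := by
        refine mul_le_mul' ?_ (measure_mono h2)
        exact_mod_cast Nat.cast_le.2 hHcard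
    _ = ((n+1 : ℕ) : ℝ≥0∞)^t.card * μ (vpowVH V (n/2+1)) := by push_cast; ring

private lemma vpowVH_growth {V : Set G} (hVc : IsCompact V) (hV0 : V ∈ nhds (0:G))
    {δ : ℝ} (hδ : 0 < δ) :
    ∃ n, 1 ≤ n ∧ μ (vpowVH V (n+6)) ≤ ENNReal.ofReal (1+δ) * μ (vpowVH V n) := by
  by_contra hcon
  push_neg at hcon
  have h0V : (0:G) ∈ V := mem_of_mem_nhds hV0
  have hfin : ∀ m, μ (vpowVH V m) ≠ ⊤ := fun m => (vpowVH_compact hVc m).measure_lt_top.ne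
  have hVpos : 0 < μ V := MeasureTheory.Measure.measure_pos_of_mem_nhds μ hV0
  obtain ⟨N, hN⟩ := vpowVH_measure_recursion μ hVc hV0
  set a : ℕ → ℝ≥0∞ := fun k => μ (vpowVH V (2^k + 2)) with ha
  have hstep : ∀ k, a (k+1) ≤ 2^((k+3)*N) * a k := by
    intro k
    have h := hN (2^(k+1) + 2)
    have e1 : (2^(k+1)+2)/2 + 1 = 2^k + 2 := by
      rw [pow_succ]; omega
    rw [e1] at h
    refine h.trans (mul_le_mul' ?_ le_rfl)
    have hle : (2^(k+1)+2+1 : ℕ) ≤ 2^(k+3) := by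
      have h2 : (1:ℕ) ≤ 2^k := Nat.one_le_two_pow
      rw [pow_succ, pow_succ, pow_succ]; omega
    calc ((2^(k+1)+2+1 : ℕ) : ℝ≥0∞)^N ≤ ((2^(k+3) : ℕ) : ℝ≥0∞)^N := by
          exact pow_le_pow_left' (by exact_mod_cast Nat.cast_le.2 hle) N
      _ = 2^((k+3)*N) := by
          push_cast
          rw [← pow_mul]
  have hup : ∀ k, a k ≤ 2^((k+4)^2*N) * a 0 := by
    intro k
    induction k with
    | zero =>
        exact le_mul_of_one_le_left zero_le (one_le_pow_of_one_le' (by norm_num) _)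
    | succ k ih =>
        calc a (k+1) ≤ 2^((k+3)*N) * a k := hstep k
          _ ≤ 2^((k+3)*N) * (2^((k+4)^2*N) * a 0) := mul_le_mul' le_rfl ih
          _ = 2^((k+3)*N + (k+4)^2*N) * a 0 := by rw [pow_add, mul_assoc]
          _ ≤ 2^((k+1+4)^2*N) * a 0 := by
              refine mul_le_mul' (pow_le_pow_right' (by norm_num) ?_) le_rfl
              nlinarith [sq_nonneg (k+4)]
  have hlow : ∀ m, ENNReal.ofReal ((1+δ)^m) * μ V ≤ μ (vpowVH V (1 + 6*m)) := by
    intro m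
    induction m with
    | zero => simp [vpowVH_one]
    | succ m ih =>
        have h1 : μ (vpowVH V ((1+6*m) + 6)) > ENNReal.ofReal (1+δ) * μ (vpowVH V (1+6*m)) :=
          hcon (1+6*m) (by omega)
        have e : 1 + 6*(m+1) = (1+6*m) + 6 := by omega
        rw [e]
        refine le_trans ?_ h1.le
        rw [pow_succ, ENNReal.ofReal_mul (by positivity)]
        calc ENNReal.ofReal ((1+δ)^m) * ENNReal.ofReal (1+δ) * μ V
            = ENNReal.ofReal (1+δ) * (ENNReal.ofReal ((1+δ)^m) * μ V) := by ring
          _ ≤ ENNReal.ofReal (1+δ) * μ (vpowVH V (1+6*m)) := mul_le_mul' le_rfl ih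
  have hcomb : ∀ j : ℕ, ENNReal.ofReal ((1+δ)^(2^j)) * μ V ≤ 2^((j+7)^2*N) * a 0 := by
    intro j
    have h1 : (1 + 6*2^j : ℕ) ≤ 2^(j+3) + 2 := by
      have h2 : (1:ℕ) ≤ 2^j := Nat.one_le_two_pow
      rw [pow_succ, pow_succ, pow_succ]; omega
    calc ENNReal.ofReal ((1+δ)^(2^j)) * μ V ≤ μ (vpowVH V (1 + 6*2^j)) := hlow (2^j)
      _ ≤ a (j+3) := measure_mono (vpowVH_mono h0V h1)
      _ ≤ 2^((j+3+4)^2*N) * a 0 := hup (j+3)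
  set α : ℝ := (μ V).toReal with hαdef
  have hα : 0 < α := ENNReal.toReal_pos hVpos.ne' hVc.measure_lt_top.ne
  set B : ℝ := (a 0).toReal with hBdef
  have hB0 : 0 ≤ B := ENNReal.toReal_nonneg
  have hreal : ∀ j : ℕ, (1+δ)^(2^j) * α ≤ 2^((j+7)^2*N) * B := by
    intro j
    have hRfin : (2^((j+7)^2*N) : ℝ≥0∞) * a 0 ≠ ⊤ :=
      ENNReal.mul_ne_top (ENNReal.pow_ne_top (by norm_num)) (hfin _)
    have h := ENNReal.toReal_mono hRfin (hcomb j)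
    rw [ENNReal.toReal_mul, ENNReal.toReal_mul, ENNReal.toReal_ofReal (by positivity),
      ENNReal.toReal_pow] at h
    simpa using h
  have hone : (1:ℝ) < 1 + δ := by linarith
  obtain ⟨M, hM⟩ := pow_unbounded_of_one_lt (max ((2:ℝ)^N) (B/α)) hone
  have hc1a : (2:ℝ)^N ≤ (1+δ)^M := le_of_lt (lt_of_le_of_lt (le_max_left _ _) hM)
  have hc1b : B/α < (1+δ)^M := lt_of_le_of_lt (le_max_right _ _) hM
  have hlo := isLittleO_pow_const_const_pow_of_one_lt (R := ℝ) 2 (by norm_num : (1:ℝ) < 2)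
  have hev := hlo.def (c := 1/(128*(M+1))) (by positivity)
  obtain ⟨n0, hn0⟩ := Filter.eventually_atTop.1 hev
  set j : ℕ := max n0 M with hjdef
  have hkeyR : ((M+1 : ℕ) : ℝ) * ((j+7 : ℕ) : ℝ)^2 ≤ 2^j := by
    have h2 := hn0 (j+7) (le_trans (le_max_left n0 M) (by omega))
    rw [Real.norm_eq_abs, Real.norm_eq_abs, abs_of_nonneg (by positivity),
      abs_of_nonneg (by positivity)] at h2
    have e : (2:ℝ)^(j+7) = 2^j * 128 := by rw [pow_add]; norm_num
    rw [e] at h2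
    have hM1 : (0:ℝ) < 128*(M+1) := by positivity
    rw [div_mul_eq_mul_div, le_div_iff₀ hM1] at h2
    push_cast at h2 ⊢
    nlinarith [h2]
  have hkey : M*((j+7)^2+1) ≤ 2^j := by
    have hMj : M ≤ (j+7)^2 := by
      have h3 : M ≤ j := le_max_right n0 M
      nlinarith
    have h3 : (M+1)*(j+7)^2 ≤ 2^j := by
      have h4 := hkeyR
      have hcast : ((M+1)*(j+7)^2 : ℕ) ≤ (2^j : ℕ) := by
        rw [← Nat.cast_le (α := ℝ)]
        push_cast
        push_cast at h4
        nlinarith [h4]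
      exact hcast
    nlinarith
  have hfinal : 2^((j+7)^2*N) * B < (1+δ)^(2^j) * α := by
    have h1 : (2:ℝ)^((j+7)^2*N) ≤ ((1+δ)^M)^((j+7)^2) := by
      rw [mul_comm, pow_mul]
      exact pow_le_pow_left₀ (by positivity) hc1a _
    have h2 : B < (1+δ)^M * α := by
      rw [div_lt_iff₀ hα] at hc1b; linarith
    have h3 : (2:ℝ)^((j+7)^2*N) * B < ((1+δ)^M)^((j+7)^2) * ((1+δ)^M * α) :=
      calc (2:ℝ)^((j+7)^2*N) * B ≤ ((1+δ)^M)^((j+7)^2) * B :=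
            mul_le_mul_of_nonneg_right h1 hB0
        _ < ((1+δ)^M)^((j+7)^2) * ((1+δ)^M * α) :=
            mul_lt_mul_of_pos_left h2 (by positivity)
    refine h3.trans_le ?_
    rw [← mul_assoc, ← pow_succ, ← pow_mul]
    exact mul_le_mul_of_nonneg_right (pow_le_pow_right₀ hone.le hkey) hα.le
  exact absurd (hreal j) (not_le.2 hfinal)

variable [LocallyCompactSpace G]

private lemma vanHove_step (D : Set G) (hD : IsCompact D) {ε : ℝ} (hε : 0 < ε) :
    ∃ S : Set G, IsCompact S ∧ IsClosed S ∧ D ⊆ interior S ∧ S = closure (interior S) ∧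
      μ (frontier S) = 0 ∧ 0 < μ S ∧
      ∀ K : Set G, K ⊆ D →
        μ (((K + S) ∩ closure Sᶜ) ∪ ((K + closure Sᶜ) ∩ S)) ≤ ENNReal.ofReal ε * μ S := by
  classical
  obtain ⟨W, hWc, hW0⟩ := exists_compact_mem_nhds (0:G)
  set V : Set G := (D ∪ -D) ∪ (W ∪ -W) with hVdef
  have hVc : IsCompact V := (hD.union hD.neg).union (hWc.union hWc.neg)
  have hV0 : V ∈ nhds (0:G) := Filter.mem_of_superset hW0 fun x hx => Or.inr (Or.inl hx)
  have hDV : D ⊆ V := fun x hx => Or.inl (Or.inl hx)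
  have h0V : (0:G) ∈ V := mem_of_mem_nhds hV0
  have h0int : (0:G) ∈ interior V := mem_interior_iff_mem_nhds.2 hV0
  have hnegV : ∀ x ∈ V, -x ∈ V := by
    rintro x ((h|h)|(h|h))
    · exact Or.inl (Or.inr (by simpa using h))
    · exact Or.inl (Or.inl (by simpa using h))
    · exact Or.inr (Or.inr (by simpa using h))
    · exact Or.inr (Or.inl (by simpa using h))
  obtain ⟨n, hn1, hng⟩ := vpowVH_growth μ hVc hV0 (half_pos hε)
  set P : ℕ → Set G := vpowVH V with hPdef
  set a : ℝ≥0∞ := μ (P n) with hadef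
  have hPc : ∀ k, IsCompact (P k) := vpowVH_compact hVc
  have hPfin : ∀ k, μ (P k) ≠ ⊤ := fun k => (hPc k).measure_lt_top.ne
  have hPmono : ∀ {k l : ℕ}, k ≤ l → P k ⊆ P l := fun h => vpowVH_mono h0V h
  have hPsucc : ∀ k, P (k+1) = V + P k := fun k => rfl
  have hPsucc' : ∀ k, P k + V = P (k+1) := fun k => by rw [hPsucc, add_comm]
  set O : Set G := P (n+2) + interior V with hOdef
  have hOopen : IsOpen O := isOpen_interior.add_left
  have hOP3 : O ⊆ P (n+3) := by
    rw [← hPsucc' (n+2)]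
    exact Set.add_subset_add subset_rfl interior_subset
  have hFO : P (n+2) ⊆ O := fun x hx => ⟨x, hx, 0, h0int, add_zero x⟩
  obtain ⟨f, hf0, hf1, hf01⟩ := exists_continuous_zero_one_of_isCompact (hPc (n+2))
    hOopen.isClosed_compl (Set.disjoint_left.2 fun x hx hc => hc (hFO hx))
  have hOfin : μ O ≠ ⊤ := ((measure_mono hOP3).trans_lt (hPc (n+3)).measure_lt_top).ne
  haveI : IsFiniteMeasure (μ.restrict O) :=
    ⟨by rw [Measure.restrict_apply_univ]; exact hOfin.lt_top⟩
  have hcnt := MeasureTheory.Measure.countable_meas_level_set_pos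
    (μ := μ.restrict O) (f.continuous.measurable)
  have hbad : ∃ t ∈ Set.Ioo (0:ℝ) 1, ¬ 0 < (μ.restrict O) {x | f x = t} := by
    by_contra hcon
    push_neg at hcon
    have hsub : Set.Ioo (0:ℝ) 1 ⊆ {t : ℝ | 0 < (μ.restrict O) {x | f x = t}} :=
      fun t ht => hcon t ht
    have hmon := measure_mono (μ := volume) hsub
    rw [(hcnt.measure_zero volume)] at hmon
    simp [Real.volume_Ioo] at hmon
  obtain ⟨t, htIoo, hlevel⟩ := hbad
  have ht0 : (0:ℝ) < t := htIoo.1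
  have ht1 : t < 1 := htIoo.2
  have hlevelO : {x | f x = t} ⊆ O := by
    intro x hx
    by_contra hxO
    have h1 := hf1 hxO
    replace h1 : f x = 1 := h1
    rw [Set.mem_setOf_eq] at hx
    rw [show f x = 1 from h1] at hx
    exact absurd hx (by linarith)
  have hlevel0 : μ {x | f x = t} = 0 := by
    have hm : MeasurableSet {x | f x = t} :=
      (f.continuous.measurable (measurableSet_singleton t))
    have he : (μ.restrict O) {x | f x = t} = μ {x | f x = t} := by
      rw [Measure.restrict_apply hm, Set.inter_eq_self_of_subset_left hlevelO]
    rw [← he]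
    exact le_antisymm (le_of_not_gt hlevel) zero_le
  set S : Set G := closure {x | f x < t} with hSdef
  have hSclosed : IsClosed S := isClosed_closure
  have hopen_lt : IsOpen {x | f x < t} := isOpen_lt f.continuous continuous_const
  have hFt : P (n+2) ⊆ {x | f x < t} := by
    intro x hx
    have h1 := hf0 hx
    replace h1 : f x = 0 := h1
    rw [Set.mem_setOf_eq, show f x = 0 from h1]
    exact ht0
  have hlt_int : {x | f x < t} ⊆ interior S := interior_maximal subset_closure hopen_lt
  have hSle : S ⊆ {x | f x ≤ t} :=
    closure_minimal (fun x hx => show f x ≤ t from le_of_lt hx)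
      (isClosed_le f.continuous continuous_const)
  have hle_O : {x | f x ≤ t} ⊆ O := by
    intro x hx
    by_contra hxO
    have h1 := hf1 hxO
    replace h1 : f x = 1 := h1
    rw [Set.mem_setOf_eq, show f x = 1 from h1] at hx
    linarith
  have hS_P3 : S ⊆ P (n+3) := hSle.trans (hle_O.trans hOP3)
  have hScomp : IsCompact S := (hPc (n+3)).of_isClosed_subset hSclosed hS_P3
  have hV_F : V ⊆ P (n+2) := by
    rw [show V = P 1 from (vpowVH_one V).symm]
    exact hPmono (by omega)
  have hFS : P (n+2) ⊆ S := hFt.trans subset_closure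
  have hDint : D ⊆ interior S := hDV.trans (hV_F.trans (hFt.trans hlt_int))
  have hreg : S = closure (interior S) := by
    refine le_antisymm ?_ ?_
    · exact closure_mono hlt_int
    · exact closure_minimal interior_subset hSclosed
  have hfront : μ (frontier S) = 0 := by
    refine measure_mono_null ?_ hlevel0
    rw [hSclosed.frontier_eq]
    intro x hx
    have hx1 : x ∈ S := hx.1
    have hx2 : x ∉ interior S := hx.2
    have h1 : f x ≤ t := hSle hx1
    have h2 : ¬ f x < t := fun h => hx2 (hlt_int h)
    exact le_antisymm h1 (not_lt.1 h2)
  have hSpos : 0 < μ S := by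
    refine MeasureTheory.Measure.measure_pos_of_nonempty_interior μ ⟨0, ?_⟩
    exact hlt_int (hFt (hV_F h0V))
  refine ⟨S, hScomp, hSclosed, hDint, hreg, hfront, hSpos, ?_⟩
  intro K hK
  set e : ℝ≥0∞ := ENNReal.ofReal (ε/2) with hedef
  have hP6 : μ (P (n+6)) ≤ (1 + e) * a := by
    have h1 : ENNReal.ofReal (1 + ε/2) = 1 + e := by
      rw [ENNReal.ofReal_add (by norm_num) (by positivity), ENNReal.ofReal_one]
    rw [← h1]
    exact hng
  have hltS : {x | f x < t} ⊆ S := subset_closure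
  have han : P n ⊆ {x | f x < t} := (hPmono (by omega)).trans hFt
  have ha_lt : a ≤ μ {x | f x < t} := measure_mono han
  have ha_S : a ≤ μ S := measure_mono (han.trans hltS)
  have hafin : a ≠ ⊤ := hPfin n
  have hKV : K ⊆ V := hK.trans hDV
  have hcc : closure (Sᶜ) = (interior S)ᶜ := closure_compl
  have hpart1 : μ ((K + S) ∩ closure Sᶜ) ≤ e * a := by
    have hsub : (K + S) ∩ closure Sᶜ ⊆ closure (P (n+4)) \ {x | f x < t} := by
      rw [hcc]
      rintro x ⟨hx1, hx2⟩
      constructor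
      · refine subset_closure ?_
        have h1 : K + S ⊆ P (n+4) := by
          rw [hPsucc (n+3)]
          exact Set.add_subset_add hKV hS_P3
        exact h1 hx1
      · exact fun h => hx2 (hlt_int h)
    have hmeas : NullMeasurableSet {x | f x < t} μ :=
      hopen_lt.measurableSet.nullMeasurableSet
    have hsub2 : {x | f x < t} ⊆ closure (P (n+4)) :=
      (hltS.trans hS_P3).trans ((hPmono (by omega)).trans subset_closure)
    have hfin2 : μ {x | f x < t} ≠ ⊤ :=
      ((measure_mono ((hltS.trans hS_P3))).trans_lt (hPc (n+3)).measure_lt_top).ne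
    calc μ ((K + S) ∩ closure Sᶜ) ≤ μ (closure (P (n+4)) \ {x | f x < t}) := measure_mono hsub
      _ = μ (closure (P (n+4))) - μ {x | f x < t} := measure_diff hsub2 hmeas hfin2
      _ ≤ ((1 + e) * a) - a := by
          refine tsub_le_tsub ?_ ha_lt
          refine le_trans (measure_mono ?_) hP6
          refine (closure_subset_add_nhdsVH hV0).trans ?_
          rw [hPsucc' (n+4)]
          exact hPmono (by omega)
      _ = e * a := by
          rw [one_add_mul]
          exact ENNReal.add_sub_cancel_left hafin
  set G0 : Set G := P n + interior V with hG0def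
  have hG0open : IsOpen G0 := isOpen_interior.add_left
  have hG0sub : G0 ⊆ P (n+2) := by
    have h1 : G0 ⊆ P n + V := Set.add_subset_add subset_rfl interior_subset
    refine h1.trans ?_
    rw [hPsucc' n]
    exact hPmono (by omega)
  have hG0S : G0 ⊆ S := hG0sub.trans hFS
  have haG0 : a ≤ μ G0 := by
    refine measure_mono ?_
    intro x hx
    exact ⟨x, hx, 0, h0int, add_zero x⟩
  have hpart2 : μ ((K + closure Sᶜ) ∩ S) ≤ e * a := by
    have hsub : (K + closure Sᶜ) ∩ S ⊆ S \ G0 := by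
      rintro x ⟨hx1, hx2⟩
      refine ⟨hx2, fun hxG0 => ?_⟩
      rw [hcc] at hx1
      obtain ⟨k, hk, y, hy, rfl⟩ := hx1
      have hyin : y ∈ V + G0 := ⟨-k, hnegV k (hKV hk), k + y, hxG0, neg_add_cancel_left k y⟩
      have hVG0 : V + G0 ⊆ {x | f x < t} := by
        have h1 : V + G0 ⊆ V + (P n + V) :=
          Set.add_subset_add subset_rfl (Set.add_subset_add subset_rfl interior_subset)
        have h2 : V + (P n + V) ⊆ P (n+2) := by
          rw [hPsucc' n, ← hPsucc (n+1)]
        exact (h1.trans h2).trans hFt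
      have hyi : y ∈ interior S := hlt_int (hVG0 hyin)
      exact hy hyi
    have hG0meas : NullMeasurableSet G0 μ := hG0open.measurableSet.nullMeasurableSet
    have hG0fin : μ G0 ≠ ⊤ := ((measure_mono hG0S).trans_lt hScomp.measure_lt_top).ne
    calc μ ((K + closure Sᶜ) ∩ S) ≤ μ (S \ G0) := measure_mono hsub
      _ = μ S - μ G0 := measure_diff hG0S hG0meas hG0fin
      _ ≤ ((1 + e) * a) - a := by
          refine tsub_le_tsub ?_ haG0
          refine le_trans (measure_mono (hS_P3.trans (hPmono (by omega)))) hP6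
      _ = e * a := by
          rw [one_add_mul]
          exact ENNReal.add_sub_cancel_left hafin
  calc μ (((K + S) ∩ closure Sᶜ) ∪ ((K + closure Sᶜ) ∩ S))
      ≤ μ ((K + S) ∩ closure Sᶜ) + μ ((K + closure Sᶜ) ∩ S) := measure_union_le _ _
    _ ≤ e * a + e * a := add_le_add hpart1 hpart2
    _ = (e + e) * a := by ring
    _ = ENNReal.ofReal ε * a := by
        rw [← ENNReal.ofReal_add (by positivity) (by positivity)]
        norm_num
    _ ≤ ENNReal.ofReal ε * μ S := mul_le_mul' le_rfl ha_S

end VanHoveAux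

/-- In a σ-compact LCA group, for any relatively compact A there exists a nested van Hove
sequence of topologically regular compact sets with null boundary containing A. -/
theorem stmt17 {G : Type*} [AddCommGroup G] [TopologicalSpace G] [IsTopologicalAddGroup G]
    [LocallyCompactSpace G] [SigmaCompactSpace G] [MeasurableSpace G] [BorelSpace G]
    (μ : Measure G) [μ.IsAddHaarMeasure]
    (A : Set G) (hA : IsCompact (closure A)) :
    ∃ S : ℕ → Set G,
      (∀ n, IsCompact (S n)) ∧
      (∀ n, 0 < μ (S n)) ∧
      (∀ n, S n = closure (interior (S n))) ∧
      (∀ n, μ (frontier (S n)) = 0) ∧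
      (∀ n, S n ⊆ interior (S (n + 1))) ∧
      (∀ n, A ⊆ S n) ∧
      (∀ K : Set G, IsCompact K →
        Tendsto (fun n =>
          μ (((K + closure (S n)) ∩ closure (S n)ᶜ) ∪ ((K + closure (S n)ᶜ) ∩ closure (S n)))
            / μ (S n)) atTop (nhds 0)) := by
  classical
  obtain ⟨C⟩ : Nonempty (CompactExhaustion G) := ⟨CompactExhaustion.choice G⟩
  have key : ∀ (D : Set G), IsCompact D → ∀ j : ℕ,
      ∃ S : Set G, IsCompact S ∧ IsClosed S ∧ D ⊆ interior S ∧ S = closure (interior S) ∧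
        μ (frontier S) = 0 ∧ 0 < μ S ∧
        ∀ K : Set G, K ⊆ D →
          μ (((K + S) ∩ closure Sᶜ) ∪ ((K + closure Sᶜ) ∩ S)) ≤
            ENNReal.ofReal (((j:ℝ)+1)⁻¹) * μ S :=
    fun D hD j => vanHove_step μ D hD (by positivity)
  choose step hc hcl hint hreg hfront hpos hbound using key
  let T : ℕ → Σ' S : Set G, IsCompact S := fun m => Nat.rec
    ⟨step (closure A ∪ C 0) (hA.union (C.isCompact 0)) 0, hc _ _ 0⟩
    (fun j ih => ⟨step (closure A ∪ C (j+1) ∪ ih.1)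
      ((hA.union (C.isCompact (j+1))).union ih.2) (j+1), hc _ _ (j+1)⟩) m
  set S : ℕ → Set G := fun m => (T m).1 with hSdef
  -- the compact sets used at each step
  let Df : ℕ → Set G := fun m => Nat.rec (closure A ∪ C 0)
    (fun j _ => closure A ∪ C (j+1) ∪ (T j).1) m
  have hDfc : ∀ m, IsCompact (Df m) := by
    intro m
    cases m with
    | zero => exact hA.union (C.isCompact 0)
    | succ j => exact (hA.union (C.isCompact (j+1))).union (T j).2
  have hSeq : ∀ m, S m = step (Df m) (hDfc m) m := by
    intro m
    cases m with
    | zero => rfl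
    | succ j => rfl
  have hclA : ∀ m, closure A ⊆ Df m := by
    intro m
    cases m with
    | zero => exact subset_union_left
    | succ j => exact subset_union_left.trans subset_union_left
  have hCD : ∀ m, C m ⊆ Df m := by
    intro m
    cases m with
    | zero => exact subset_union_right
    | succ j => exact subset_union_right.trans subset_union_left
  have hDint : ∀ m, Df m ⊆ interior (S m) := by
    intro m; rw [hSeq m]; exact hint _ _ m
  have hScomp : ∀ m, IsCompact (S m) := fun m => (T m).2
  have hSclosed : ∀ m, IsClosed (S m) := by
    intro m; rw [hSeq m]; exact hcl _ _ m
  refine ⟨S, hScomp, ?_, ?_, ?_, ?_, ?_, ?_⟩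
  · intro m; rw [hSeq m]; exact hpos _ _ m
  · intro m; rw [hSeq m]; exact hreg _ _ m
  · intro m; rw [hSeq m]; exact hfront _ _ m
  · intro m
    have h1 : S m ⊆ Df (m+1) := subset_union_right
    exact h1.trans (hDint (m+1))
  · intro m
    exact (subset_closure.trans (hclA m)).trans ((hDint m).trans interior_subset)
  · intro K hK
    obtain ⟨m0, hm0⟩ := C.exists_superset_of_isCompact hK
    have hbnd : ∀ j, m0 ≤ j →
        μ (((K + closure (S j)) ∩ closure (S j)ᶜ) ∪ ((K + closure (S j)ᶜ) ∩ closure (S j)))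
          / μ (S j) ≤ ENNReal.ofReal (((j:ℝ)+1)⁻¹) := by
      intro j hj
      have hKD : K ⊆ Df j := (hm0.trans (C.subset hj)).trans (hCD j)
      have hb := hbound (Df j) (hDfc j) j K hKD
      rw [← hSeq j] at hb
      rw [(hSclosed j).closure_eq]
      exact ENNReal.div_le_of_le_mul hb
    have hlim : Tendsto (fun j : ℕ => ENNReal.ofReal (((j:ℝ)+1)⁻¹)) atTop (nhds 0) := by
      have h1 : Tendsto (fun j : ℕ => ((j:ℝ)+1)⁻¹) atTop (nhds 0) := by
        simpa [one_div] using tendsto_one_div_add_atTop_nhds_zero_nat (𝕜 := ℝ)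
      have h2 := (ENNReal.continuous_ofReal.tendsto 0).comp h1
      rw [ENNReal.ofReal_zero] at h2
      exact h2
    refine tendsto_of_tendsto_of_tendsto_of_le_of_le' tendsto_const_nhds hlim ?_ ?_
    · exact Filter.Eventually.of_forall fun j => zero_le
    · exact Filter.eventually_atTop.2 ⟨m0, hbnd⟩
end

section
/- Let (G,H,𝓛) be a cut-and-project scheme where 𝓛 projects injectively to G and densely to H, and let W ⊂ H be relatively compact with nonempty interior. Then the model set Λ_W = π_G(𝓛 ∩ (G × W)) is relatively dense in G: there is a compact set C ⊂ G with Λ_W + C = G. -/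
open Set Pointwise

/-- A cocompact discrete subgroup of a locally compact group admits a compact
set of representatives. -/
theorem aux_exists_compact_rep {X : Type*} [AddCommGroup X] [TopologicalSpace X]
    [IsTopologicalAddGroup X] [LocallyCompactSpace X]
    (L : AddSubgroup X) [CompactSpace (X ⧸ L)] :
    ∃ K : Set X, IsCompact K ∧ ∀ x : X, ∃ l ∈ L, ∃ k ∈ K, x = l + k := by
  choose Kf hKc hKn using fun x : X => exists_compact_mem_nhds x
  let q : X → X ⧸ L := QuotientAddGroup.mk
  have hq : IsOpenMap q := QuotientAddGroup.isOpenMap_coe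
  have hcov : (Set.univ : Set (X ⧸ L)) ⊆ ⋃ x : X, q '' interior (Kf x) := by
    intro y _
    obtain ⟨x, rfl⟩ := QuotientAddGroup.mk_surjective y
    exact Set.mem_iUnion.2 ⟨x, ⟨x, mem_interior_iff_mem_nhds.2 (hKn x), rfl⟩⟩
  obtain ⟨t, ht⟩ := isCompact_univ.elim_finite_subcover
    (fun x : X => q '' interior (Kf x))
    (fun x => hq _ isOpen_interior) hcov
  refine ⟨⋃ x ∈ t, Kf x, t.isCompact_biUnion (fun x _ => hKc x), fun p => ?_⟩
  have : q p ∈ ⋃ x ∈ t, q '' interior (Kf x) := ht (Set.mem_univ _)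
  obtain ⟨x, hxt, k, hk, hqk⟩ := by
    simpa using this
  have hmem : -k + p ∈ L := by
    have := (QuotientAddGroup.eq (s := L) (a := k) (b := p)).1 hqk
    exact this
  refine ⟨-k + p, hmem, k, Set.mem_biUnion hxt (interior_subset hk), by abel⟩

/-- For a cut-and-project scheme (G, H, 𝓛) (𝓛 projects injectively to G, densely to H)
and a relatively compact window W with nonempty interior, the model set
Λ_W = π_G(𝓛 ∩ (G × W)) is relatively dense in G. -/
theorem stmt19 {G H : Type*}
    [AddCommGroup G] [TopologicalSpace G] [IsTopologicalAddGroup G] [LocallyCompactSpace G]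
    [AddCommGroup H] [TopologicalSpace H] [IsTopologicalAddGroup H] [LocallyCompactSpace H]
    (L : AddSubgroup (G × H)) [DiscreteTopology L] [CompactSpace ((G × H) ⧸ L)]
    (hinj : ∀ p ∈ L, ∀ q ∈ L, (p : G × H).1 = (q : G × H).1 → p = q)
    (hdense : Dense (Prod.snd '' (L : Set (G × H))))
    (W : Set H) (hWc : IsCompact (closure W)) (hWi : (interior W).Nonempty) :
    ∃ C : Set G, IsCompact C ∧
      (Prod.fst '' ((L : Set (G × H)) ∩ (Set.univ ×ˢ W))) + C = Set.univ := by
  obtain ⟨K, hKc, hK⟩ := aux_exists_compact_rep L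
  set U := interior W with hUdef
  have hUo : IsOpen U := isOpen_interior
  have hUW : U ⊆ W := interior_subset
  -- the compact image of K in H
  have hKH : IsCompact (Prod.snd '' K) := hKc.image continuous_snd
  -- cover it by translates of -U by points of π_H(𝓛)
  have hcov : Prod.snd '' K ⊆ ⋃ l : L, (fun h => (l : G × H).2 - h) ⁻¹' U := by
    intro h hh
    obtain ⟨x, hxd, hxo⟩ := hdense.exists_mem_open
      (ho := hUo.preimage (continuous_id.sub continuous_const) (f := fun x : H => x - h))
      ⟨hWi.choose + h, by simpa using hWi.choose_spec⟩
    obtain ⟨l, hl, rfl⟩ := hxd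
    exact Set.mem_iUnion.2 ⟨⟨l, hl⟩, hxo⟩
  obtain ⟨t, ht⟩ := hKH.elim_finite_subcover _
    (fun l : L => hUo.preimage ((continuous_const).sub continuous_id)) hcov
  refine ⟨Prod.fst '' K + (fun l : L => -(l : G × H).1) '' (t : Set L),
    (hKc.image continuous_fst).add ((t.finite_toSet.image _).isCompact), ?_⟩
  rw [Set.eq_univ_iff_forall]
  intro g
  obtain ⟨l, hl, k, hk, hgk⟩ := hK (g, 0)
  have hg1 : g = l.1 + k.1 := congrArg Prod.fst hgk
  have hg2 : (0 : H) = l.2 + k.2 := congrArg Prod.snd hgk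
  have hk2 : k.2 ∈ ⋃ l ∈ t, (fun h => (l : G × H).2 - h) ⁻¹' U :=
    ht ⟨k, hk, rfl⟩
  obtain ⟨m, hmt, hm⟩ := Set.mem_iUnion₂.1 hk2
  -- the lattice point l + m has H-component in W
  have hlm : l + (m : G × H) ∈ L := L.add_mem hl m.2
  have hlm2 : (l + (m : G × H)).2 ∈ W := by
    apply hUW
    have : l.2 = -k.2 := eq_neg_of_add_eq_zero_left hg2.symm
    simpa [this, sub_eq_neg_add] using hm
  have key : g = (l + (m : G × H)).1 + (k.1 + -(m : G × H).1) := by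
    rw [hg1, Prod.fst_add]; abel
  rw [key]
  exact Set.add_mem_add
    ⟨l + (m : G × H), ⟨hlm, ⟨Set.mem_univ _, hlm2⟩⟩, rfl⟩
    (Set.add_mem_add ⟨k, hk, rfl⟩ ⟨m, hmt, rfl⟩)
end
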